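/- If Γ is a 2-tree containing no trefoil subgraph, then BB(Γ) is isomorphic to A(Δ) for some finite simple graph Δ, i.e., BB(Γ) is a right-angled Artin group. -/

import Mathlib

def raagRels {V : Type} (G : SimpleGraph V) : Set (FreeGroup V) :=
  {r | ∃ v w : V, G.Adj v w ∧
    r = FreeGroup.of v * FreeGroup.of w * (FreeGroup.of v)⁻¹ * (FreeGroup.of w)⁻¹}

/-- The right-angled Artin group of a simple graph. -/
abbrev RAAG {V : Type} (G : SimpleGraph V) : Type := PresentedGroup (raagRels G)

/-- The canonical generator of `RAAG G` corresponding to a vertex. -/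
def raagGen {V : Type} (G : SimpleGraph V) (v : V) : RAAG G :=
  PresentedGroup.of (rels := raagRels G) v

/-- The homomorphism `A(Γ) → ℤ` sending every vertex generator to `1`. -/
def bbgChar {V : Type} (G : SimpleGraph V) : RAAG G →* Multiplicative ℤ :=
  PresentedGroup.toGroup (f := fun _ : V => Multiplicative.ofAdd (1 : ℤ)) (by
    rintro r ⟨v, w, -, rfl⟩
    simp only [map_mul, map_inv, FreeGroup.lift_apply_of]
    group)

/-- The Bestvina–Brady group of a simple graph, as a subgroup of the RAAG. -/
def BBG {V : Type} (G : SimpleGraph V) : Subgroup (RAAG G) := (bbgChar G).ker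

/-- A group is a RAAG if it is isomorphic to the RAAG on some finite simple graph. -/
def IsRAAG (H : Type) [Group H] : Prop :=
  ∃ (W : Type) (_ : Fintype W) (Δ : SimpleGraph W), Nonempty (H ≃* RAAG Δ)

/-- Add to `G` a new vertex (`none`) joined exactly to the two vertices `u` and `w`. -/
def addVertexTwoEdges {V : Type} (G : SimpleGraph V) (u w : V) : SimpleGraph (Option V) :=
  SimpleGraph.fromRel (fun x y =>
    (∃ a b : V, x = some a ∧ y = some b ∧ G.Adj a b) ∨
    (x = none ∧ (y = some u ∨ y = some w)))

/-- 2-trees, defined inductively: `K₂` is a 2-tree, and adding a new vertex joined to the two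
endpoints of an existing edge of a 2-tree yields a 2-tree (up to graph isomorphism). -/
inductive Is2Tree : {V : Type} → SimpleGraph V → Prop
  | base : Is2Tree (⊤ : SimpleGraph (Fin 2))
  | extend {V : Type} (G : SimpleGraph V) (u w : V) (huw : G.Adj u w) (hG : Is2Tree G) :
      Is2Tree (addVertexTwoEdges G u w)
  | iso {V W : Type} (G : SimpleGraph V) (H : SimpleGraph W) (hG : Is2Tree G)
      (h : Nonempty (G ≃g H)) : Is2Tree H

/-- `G` contains a trefoil subgraph: an injective map from the six vertices of the trefoil
graph into `G` sending edges to edges. -/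
def ContainsTrefoil {V : Type} (G : SimpleGraph V) : Prop :=
  ∃ a b c x y z : V, Function.Injective ![a, b, c, x, y, z] ∧
    G.Adj a b ∧ G.Adj b c ∧ G.Adj c a ∧ G.Adj x a ∧ G.Adj x b ∧
    G.Adj y b ∧ G.Adj y c ∧ G.Adj z c ∧ G.Adj z a

/-! ### Generic RAAG lemmas -/

theorem raag_commute {V : Type} {G : SimpleGraph V} {v w : V} (h : G.Adj v w) :
    Commute (PresentedGroup.of (rels := raagRels G) v)
      (PresentedGroup.of (rels := raagRels G) w) := by
  have hmem : (FreeGroup.of v * FreeGroup.of w * (FreeGroup.of v)⁻¹ * (FreeGroup.of w)⁻¹)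
      ∈ Subgroup.normalClosure (raagRels G) :=
    Subgroup.subset_normalClosure ⟨v, w, h, rfl⟩
  have h1 : (PresentedGroup.mk (raagRels G))
      (FreeGroup.of v * FreeGroup.of w * (FreeGroup.of v)⁻¹ * (FreeGroup.of w)⁻¹) = 1 :=
    (QuotientGroup.eq_one_iff _).2 hmem
  rw [map_mul, map_mul, map_inv, map_inv] at h1
  have h2 : ∀ a b : RAAG G, a * b * a⁻¹ * b⁻¹ = 1 → Commute a b := by
    intro a b hab
    have : a * b = (a * b * a⁻¹ * b⁻¹) * (b * a) := by group
    rw [hab, one_mul] at this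
    exact this
  exact h2 _ _ h1

theorem raag_check {V : Type} {G : SimpleGraph V} {H : Type} [Group H] {f : V → H}
    (h : ∀ v w, G.Adj v w → Commute (f v) (f w)) :
    ∀ r ∈ raagRels G, FreeGroup.lift f r = 1 := by
  rintro _ ⟨v, w, hvw, rfl⟩
  simp only [map_mul, map_inv, FreeGroup.lift_apply_of]
  have hc := (h v w hvw).eq
  rw [mul_assoc, mul_assoc, ← mul_inv_rev, ← hc, mul_inv_rev, ← mul_assoc, ← mul_assoc]
  group

/-- lift a vertex map with commuting images to a hom out of the RAAG. -/
def raagLift {V : Type} {G : SimpleGraph V} {H : Type} [Group H] (f : V → H)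
    (h : ∀ v w, G.Adj v w → Commute (f v) (f w)) : RAAG G →* H :=
  PresentedGroup.toGroup (raag_check h)

@[simp] theorem raagLift_of {V : Type} {G : SimpleGraph V} {H : Type} [Group H] (f : V → H)
    (h : ∀ v w, G.Adj v w → Commute (f v) (f w)) (x : V) :
    raagLift f h (PresentedGroup.of x) = f x :=
  PresentedGroup.toGroup.of _

/-! ### Part B : from a triangle-spanning-tree structure to the RAAG structure on BBG -/

section PartB

variable {V : Type} [DecidableEq V] (G : SimpleGraph V) (r : V) (pa : V → V)

/-- the (unordered) edge `{x,y}` is an edge of the tree determined by the parent map `pa`. -/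
def inT (x y : V) : Prop := (pa y = x ∧ y ≠ r) ∨ (pa x = y ∧ x ≠ r)

theorem inT_symm {r : V} {pa : V → V} {x y : V} (h : inT r pa x y) : inT r pa y x :=
  h.elim Or.inr Or.inl

def good (a b : V) : Prop := a = b ∨ G.Adj a b

theorem good_symm {G : SimpleGraph V} {a b : V} (h : good G a b) : good G b a :=
  h.elim (fun e => Or.inl e.symm) (fun e => Or.inr e.symm)

theorem good_commute {G : SimpleGraph V} {a b : V} (h : good G a b) :
    Commute (PresentedGroup.of (rels := raagRels G) a)
      (PresentedGroup.of (rels := raagRels G) b) := by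
  rcases h with rfl | h
  · exact Commute.refl _
  · exact raag_commute h

/-- The graph `Δ`: vertices are the tree edges (indexed by their lower endpoint, i.e. the
non-root vertices); two tree edges are adjacent if they lie in a common triangle of `G`. -/
def Delta : SimpleGraph {z : V // z ≠ r} where
  Adj w w' := w ≠ w' ∧ (pa w.1 = pa w'.1 ∨ pa w.1 = w'.1 ∨ w.1 = pa w'.1) ∧
    good G (pa w.1) (pa w'.1) ∧ good G (pa w.1) w'.1 ∧ good G w.1 (pa w'.1) ∧
    good G w.1 w'.1
  symm := ⟨by
    rintro w w' ⟨h1, h2, h3, h4, h5, h6⟩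
    refine ⟨h1.symm, ?_, good_symm h3, good_symm h5, good_symm h4,
      good_symm h6⟩
    rcases h2 with h | h | h
    · exact Or.inl h.symm
    · exact Or.inr (Or.inr h.symm)
    · exact Or.inr (Or.inl h.symm)⟩
  loopless := ⟨fun w h => h.1 rfl⟩

/-- the word `n_z = q_{e_k} ⋯ q_{e_1}` along the tree path from the root to `z`. -/
def nw (d : V → ℕ) (hd : ∀ z, z ≠ r → d z = d (pa z) + 1) (z : V) : RAAG (Delta G r pa) :=
  if h : z = r then 1 else
    PresentedGroup.of (rels := raagRels (Delta G r pa)) ⟨z, h⟩ * nw d hd (pa z)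
termination_by d z
decreasing_by rw [hd z h]; omega

/-- the reversed word `M_z = q_{e_1} ⋯ q_{e_k}`. -/
def Mw (d : V → ℕ) (hd : ∀ z, z ≠ r → d z = d (pa z) + 1) (z : V) : RAAG (Delta G r pa) :=
  if h : z = r then 1 else
    Mw d hd (pa z) * PresentedGroup.of (rels := raagRels (Delta G r pa)) ⟨z, h⟩
termination_by d z
decreasing_by rw [hd z h]; omega

variable (d : V → ℕ) (hd : ∀ z, z ≠ r → d z = d (pa z) + 1)

theorem nw_r : nw G r pa d hd r = 1 := by rw [nw]; simp

theorem nw_ne {z : V} (h : z ≠ r) :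
    nw G r pa d hd z = PresentedGroup.of (rels := raagRels (Delta G r pa)) ⟨z, h⟩ *
      nw G r pa d hd (pa z) := by
  rw [nw]; simp [h]

theorem Mw_r : Mw G r pa d hd r = 1 := by rw [Mw]; simp

theorem Mw_ne {z : V} (h : z ≠ r) :
    Mw G r pa d hd z = Mw G r pa d hd (pa z) *
      PresentedGroup.of (rels := raagRels (Delta G r pa)) ⟨z, h⟩ := by
  rw [Mw]; simp [h]

section Sigma

variable (hadj : ∀ z, z ≠ r → G.Adj (pa z) z)

/-- vertex generators of `RAAG (Delta G r pa)`. -/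
abbrev ofD (w : {z : V // z ≠ r}) : RAAG (Delta G r pa) :=
  PresentedGroup.of (rels := raagRels (Delta G r pa)) w

/-- the map defining the automorphism `σ` (conjugation by the root). -/
def sigmaf (w : {z : V // z ≠ r}) : RAAG (Delta G r pa) :=
  (nw G r pa d hd (pa w.1))⁻¹ * ofD G r pa w * nw G r pa d hd (pa w.1)

/-- the map defining the inverse automorphism `τ`. -/
def tauf (w : {z : V // z ≠ r}) : RAAG (Delta G r pa) :=
  Mw G r pa d hd (pa w.1) * ofD G r pa w * (Mw G r pa d hd (pa w.1))⁻¹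

theorem sigmaf_eq (w : {z : V // z ≠ r}) (s : V) (hs : s = pa w.1 ∨ s = w.1) :
    sigmaf G r pa d hd w = (nw G r pa d hd s)⁻¹ * ofD G r pa w * nw G r pa d hd s := by
  rcases hs with rfl | rfl
  · rfl
  · rw [sigmaf, nw_ne G r pa d hd w.2]
    show _ = ((ofD G r pa ⟨w.1, w.2⟩) * _)⁻¹ * _ * ((ofD G r pa ⟨w.1, w.2⟩) * _)
    group

theorem tauf_eq (w : {z : V // z ≠ r}) (s : V) (hs : s = pa w.1 ∨ s = w.1) :
    tauf G r pa d hd w = Mw G r pa d hd s * ofD G r pa w * (Mw G r pa d hd s)⁻¹ := by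
  rcases hs with rfl | rfl
  · rfl
  · rw [tauf, Mw_ne G r pa d hd w.2]
    show _ = (_ * (ofD G r pa ⟨w.1, w.2⟩)) * _ * (_ * (ofD G r pa ⟨w.1, w.2⟩))⁻¹
    group

/-- two tree edges adjacent in `Delta` share a vertex. -/
theorem delta_shared {w w' : {z : V // z ≠ r}} (h : (Delta G r pa).Adj w w') :
    ∃ s : V, (s = pa w.1 ∨ s = w.1) ∧ (s = pa w'.1 ∨ s = w'.1) := by
  rcases h.2.1 with h2 | h2 | h2
  · exact ⟨pa w.1, Or.inl rfl, Or.inl h2⟩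
  · exact ⟨pa w.1, Or.inl rfl, Or.inr h2⟩
  · exact ⟨w.1, Or.inr rfl, Or.inl h2⟩

theorem commute_conj {H : Type} [Group H] {a b : H} (c : H) (h : Commute a b) :
    Commute (c * a * c⁻¹) (c * b * c⁻¹) := by
  have e1 : c * a * c⁻¹ * (c * b * c⁻¹) = c * (a * b) * c⁻¹ := by group
  have e2 : c * b * c⁻¹ * (c * a * c⁻¹) = c * (b * a) * c⁻¹ := by group
  unfold Commute SemiconjBy
  rw [e1, e2, h.eq]

theorem commute_conj' {H : Type} [Group H] {a b : H} (c : H) (h : Commute a b) :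
    Commute (c⁻¹ * a * c) (c⁻¹ * b * c) := by
  simpa using commute_conj c⁻¹ h

theorem sigmaf_comm (w w' : {z : V // z ≠ r}) (h : (Delta G r pa).Adj w w') :
    Commute (sigmaf G r pa d hd w) (sigmaf G r pa d hd w') := by
  obtain ⟨s, hs, hs'⟩ := delta_shared G r pa h
  rw [sigmaf_eq G r pa d hd w s hs, sigmaf_eq G r pa d hd w' s hs']
  exact commute_conj' _ (raag_commute h)

theorem tauf_comm (w w' : {z : V // z ≠ r}) (h : (Delta G r pa).Adj w w') :
    Commute (tauf G r pa d hd w) (tauf G r pa d hd w') := by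
  obtain ⟨s, hs, hs'⟩ := delta_shared G r pa h
  rw [tauf_eq G r pa d hd w s hs, tauf_eq G r pa d hd w' s hs']
  exact commute_conj _ (raag_commute h)

/-- the endomorphism `σ`. -/
def sigmaH : RAAG (Delta G r pa) →* RAAG (Delta G r pa) :=
  raagLift (sigmaf G r pa d hd) (sigmaf_comm G r pa d hd)

/-- the endomorphism `τ`. -/
def tauH : RAAG (Delta G r pa) →* RAAG (Delta G r pa) :=
  raagLift (tauf G r pa d hd) (tauf_comm G r pa d hd)

theorem sigmaH_of (w : {z : V // z ≠ r}) :
    sigmaH G r pa d hd (ofD G r pa w) = sigmaf G r pa d hd w := raagLift_of _ _ _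

theorem tauH_of (w : {z : V // z ≠ r}) :
    tauH G r pa d hd (ofD G r pa w) = tauf G r pa d hd w := raagLift_of _ _ _

theorem sigmaH_Mw (z : V) : sigmaH G r pa d hd (Mw G r pa d hd z) = nw G r pa d hd z := by
  by_cases h : z = r
  · subst h; rw [Mw_r, nw_r, map_one]
  · rw [Mw_ne G r pa d hd h, nw_ne G r pa d hd h, map_mul,
      sigmaH_Mw (pa z), sigmaH_of, sigmaf_eq G r pa d hd ⟨z, h⟩ (pa z) (Or.inl rfl)]
    group
termination_by d z
decreasing_by rw [hd z h]; omega

theorem tauH_nw (z : V) : tauH G r pa d hd (nw G r pa d hd z) = Mw G r pa d hd z := by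
  by_cases h : z = r
  · subst h; rw [Mw_r, nw_r, map_one]
  · rw [Mw_ne G r pa d hd h, nw_ne G r pa d hd h, map_mul,
      tauH_nw (pa z), tauH_of, tauf_eq G r pa d hd ⟨z, h⟩ (pa z) (Or.inl rfl)]
    group
termination_by d z
decreasing_by rw [hd z h]; omega

theorem tau_sigma (x : RAAG (Delta G r pa)) :
    tauH G r pa d hd (sigmaH G r pa d hd x) = x := by
  have : (tauH G r pa d hd).comp (sigmaH G r pa d hd) = MonoidHom.id _ := by
    apply PresentedGroup.ext
    intro w
    show tauH G r pa d hd (sigmaH G r pa d hd (ofD G r pa w)) = ofD G r pa w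
    rw [sigmaH_of, sigmaf, map_mul, map_mul, map_inv, tauH_nw, tauH_of,
      tauf_eq G r pa d hd w (pa w.1) (Or.inl rfl)]
    group
  exact DFunLike.congr_fun this x

theorem sigma_tau (x : RAAG (Delta G r pa)) :
    sigmaH G r pa d hd (tauH G r pa d hd x) = x := by
  have : (sigmaH G r pa d hd).comp (tauH G r pa d hd) = MonoidHom.id _ := by
    apply PresentedGroup.ext
    intro w
    show sigmaH G r pa d hd (tauH G r pa d hd (ofD G r pa w)) = ofD G r pa w
    rw [tauH_of, tauf, map_mul, map_mul, map_inv, sigmaH_Mw, sigmaH_of,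
      sigmaf_eq G r pa d hd w (pa w.1) (Or.inl rfl)]
    group
  exact DFunLike.congr_fun this x

/-- the automorphism `σ` of `RAAG Δ`. -/
def sigmaE : RAAG (Delta G r pa) ≃* RAAG (Delta G r pa) :=
  MonoidHom.toMulEquiv (sigmaH G r pa d hd) (tauH G r pa d hd)
    (MonoidHom.ext (tau_sigma G r pa d hd)) (MonoidHom.ext (sigma_tau G r pa d hd))

theorem sigmaE_apply (x : RAAG (Delta G r pa)) :
    sigmaE G r pa d hd x = sigmaH G r pa d hd x := rfl

end Sigma

section Main

/-- structure of the word `nw` along a tree edge. -/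
theorem inT_rel {a b : V} (h : inT r pa a b) :
    ∃ (w : {z : V // z ≠ r}) (g : RAAG (Delta G r pa)),
      (g = ofD G r pa w ∨ g = (ofD G r pa w)⁻¹) ∧
      nw G r pa d hd a = g * nw G r pa d hd b ∧
      sigmaH G r pa d hd (ofD G r pa w) =
        (nw G r pa d hd b)⁻¹ * ofD G r pa w * nw G r pa d hd b ∧
      ((pa w.1 = b ∧ w.1 = a) ∨ (pa w.1 = a ∧ w.1 = b)) := by
  rcases h with ⟨hpb, hbr⟩ | ⟨hpa, har⟩
  · -- pa b = a, b ≠ r : edge vertex is b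
    refine ⟨⟨b, hbr⟩, (ofD G r pa ⟨b, hbr⟩)⁻¹, Or.inr rfl, ?_, ?_, Or.inr ⟨hpb, rfl⟩⟩
    · rw [nw_ne G r pa d hd hbr, hpb]; group
    · rw [sigmaH_of, sigmaf_eq G r pa d hd ⟨b, hbr⟩ b (Or.inr rfl)]
  · -- pa a = b, a ≠ r : edge vertex is a
    refine ⟨⟨a, har⟩, ofD G r pa ⟨a, har⟩, Or.inl rfl, ?_, ?_, Or.inl ⟨hpa, rfl⟩⟩
    · rw [nw_ne G r pa d hd har, hpa]
    · rw [sigmaH_of, sigmaf_eq G r pa d hd ⟨a, har⟩ b (Or.inl hpa.symm)]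

theorem sigma_conj_of_rel {w : {z : V // z ≠ r}} {g : RAAG (Delta G r pa)} {s : V}
    (hg : g = ofD G r pa w ∨ g = (ofD G r pa w)⁻¹)
    (hs : sigmaH G r pa d hd (ofD G r pa w) =
      (nw G r pa d hd s)⁻¹ * ofD G r pa w * nw G r pa d hd s) :
    sigmaH G r pa d hd g = (nw G r pa d hd s)⁻¹ * g * nw G r pa d hd s := by
  rcases hg with rfl | rfl
  · exact hs
  · rw [map_inv, hs]; group

/-- The central commutation identity: for every edge of `G`,
`n_x σ(n_y) = n_y σ(n_x)`. -/
theorem Cid (h3 : ∀ x y, G.Adj x y → ¬ inT r pa x y →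
      ∃ s, G.Adj x s ∧ G.Adj y s ∧ inT r pa x s ∧ inT r pa y s)
    {x y : V} (hxy : G.Adj x y) :
    nw G r pa d hd x * sigmaH G r pa d hd (nw G r pa d hd y) =
      nw G r pa d hd y * sigmaH G r pa d hd (nw G r pa d hd x) := by
  by_cases hT : inT r pa x y
  · obtain ⟨w, g, hg, hnx, hsw, -⟩ := inT_rel G r pa d hd hT
    have hsg := sigma_conj_of_rel G r pa d hd hg hsw
    rw [hnx, map_mul, hsg]
    group
  · obtain ⟨s, hxs, hys, hTxs, hTys⟩ := h3 x y hxy hT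
    obtain ⟨w1, g1, hg1, hnx, hsw1, hD1⟩ := inT_rel G r pa d hd hTxs
    obtain ⟨w2, g2, hg2, hny, hsw2, hD2⟩ := inT_rel G r pa d hd hTys
    have hsg1 := sigma_conj_of_rel G r pa d hd hg1 hsw1
    have hsg2 := sigma_conj_of_rel G r pa d hd hg2 hsw2
    -- the two tree edges are adjacent in Delta
    have hDadj : (Delta G r pa).Adj w1 w2 := by
      have hxy' : x ≠ y := hxy.ne
      have hxs' : x ≠ s := hxs.ne
      have hys' : y ≠ s := hys.ne
      rcases hD1 with ⟨e1, f1⟩ | ⟨e1, f1⟩ <;> rcases hD2 with ⟨e2, f2⟩ | ⟨e2, f2⟩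
      · -- pa w1 = s, w1 = x ; pa w2 = s, w2 = y
        refine ⟨?_, Or.inl (by rw [e1, e2]), ?_, ?_, ?_, ?_⟩
        · intro hw; apply hxy'; rw [← f1, ← f2, hw]
        · rw [e1, e2]; exact Or.inl rfl
        · rw [e1, f2]; exact Or.inr hys.symm
        · rw [f1, e2]; exact Or.inr hxs
        · rw [f1, f2]; exact Or.inr hxy
      · -- pa w1 = s, w1 = x ; pa w2 = y, w2 = s
        refine ⟨?_, Or.inr (Or.inl (by rw [e1, f2])), ?_, ?_, ?_, ?_⟩
        · intro hw; apply hxs'; rw [← f1, ← f2, hw]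
        · rw [e1, e2]; exact Or.inr hys.symm
        · rw [e1, f2]; exact Or.inl rfl
        · rw [f1, e2]; exact Or.inr hxy
        · rw [f1, f2]; exact Or.inr hxs
      · -- pa w1 = x, w1 = s ; pa w2 = s, w2 = y
        refine ⟨?_, Or.inr (Or.inr (by rw [f1, e2])), ?_, ?_, ?_, ?_⟩
        · intro hw; apply hys'.symm; rw [← f1, ← f2, hw]
        · rw [e1, e2]; exact Or.inr hxs
        · rw [e1, f2]; exact Or.inr hxy
        · rw [f1, e2]; exact Or.inl rfl
        · rw [f1, f2]; exact Or.inr hys.symm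
      · -- pa w1 = x, w1 = s ; pa w2 = y, w2 = s : impossible
        exfalso
        have : w1 = w2 := Subtype.ext (by rw [f1, f2])
        rw [this, e2] at e1
        exact hxy' (e1.symm.trans rfl) |>.elim
    have hcom : Commute g1 g2 := by
      have h0 : Commute (ofD G r pa w1) (ofD G r pa w2) := raag_commute hDadj
      rcases hg1 with rfl | rfl <;> rcases hg2 with rfl | rfl
      · exact h0
      · exact h0.inv_right
      · exact h0.inv_left
      · exact h0.inv_left.inv_right
    rw [hnx, hny, map_mul, map_mul, hsg1, hsg2]
    have lhs : g1 * nw G r pa d hd s *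
        ((nw G r pa d hd s)⁻¹ * g2 * nw G r pa d hd s * sigmaH G r pa d hd (nw G r pa d hd s)) =
        (g1 * g2) * (nw G r pa d hd s * sigmaH G r pa d hd (nw G r pa d hd s)) := by group
    have rhs : g2 * nw G r pa d hd s *
        ((nw G r pa d hd s)⁻¹ * g1 * nw G r pa d hd s * sigmaH G r pa d hd (nw G r pa d hd s)) =
        (g2 * g1) * (nw G r pa d hd s * sigmaH G r pa d hd (nw G r pa d hd s)) := by group
    rw [lhs, rhs, hcom.eq]

end Main

section Iso

open SemidirectProduct

/-- the `ℤ`-action on `RAAG Δ` generated by `σ`. -/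
def phiZ : Multiplicative ℤ →* MulAut (RAAG (Delta G r pa)) :=
  zpowersHom (MulAut (RAAG (Delta G r pa))) (sigmaE G r pa d hd)

/-- the semidirect product `RAAG Δ ⋊ ℤ`. -/
abbrev SD := SemidirectProduct (RAAG (Delta G r pa)) (Multiplicative ℤ) (phiZ G r pa d hd)

theorem phiZ_t : phiZ G r pa d hd (Multiplicative.ofAdd 1) = sigmaE G r pa d hd := by
  show (sigmaE G r pa d hd) ^ ((Multiplicative.ofAdd (1 : ℤ)).toAdd) = _
  simp

theorem gen_mul (a b : RAAG (Delta G r pa)) :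
    ((inl a * inr (Multiplicative.ofAdd 1)) : SD G r pa d hd) *
      (inl b * inr (Multiplicative.ofAdd 1)) =
    inl (a * sigmaH G r pa d hd b) *
      inr (Multiplicative.ofAdd 1 * Multiplicative.ofAdd 1) := by
  have h1 : (inl (phiZ G r pa d hd (Multiplicative.ofAdd 1) b) : SD G r pa d hd) *
      inr (Multiplicative.ofAdd 1) = inr (Multiplicative.ofAdd 1) * inl b := by
    rw [inl_aut, mul_assoc, ← map_mul, inv_mul_cancel]; simp
  have h2 : phiZ G r pa d hd (Multiplicative.ofAdd 1) b = sigmaH G r pa d hd b := by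
    rw [phiZ_t]; rfl
  calc (inl a * inr (Multiplicative.ofAdd 1) : SD G r pa d hd) *
        (inl b * inr (Multiplicative.ofAdd 1))
      = inl a * (inr (Multiplicative.ofAdd 1) * inl b) * inr (Multiplicative.ofAdd 1) := by
        group
    _ = inl a * (inl (phiZ G r pa d hd (Multiplicative.ofAdd 1) b) *
          inr (Multiplicative.ofAdd 1)) * inr (Multiplicative.ofAdd 1) := by rw [h1]
    _ = (inl a * inl (phiZ G r pa d hd (Multiplicative.ofAdd 1) b)) *
          (inr (Multiplicative.ofAdd 1) * inr (Multiplicative.ofAdd 1)) := by group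
    _ = _ := by rw [← map_mul, ← map_mul, h2]

/-- the homomorphism `RAAG G → RAAG Δ ⋊ ℤ`. -/
def PhiH (h3 : ∀ x y, G.Adj x y → ¬ inT r pa x y →
      ∃ s, G.Adj x s ∧ G.Adj y s ∧ inT r pa x s ∧ inT r pa y s) :
    RAAG G →* SD G r pa d hd :=
  raagLift (fun z => inl (nw G r pa d hd z) * inr (Multiplicative.ofAdd 1))
    (by
      intro x y hxy
      unfold Commute SemiconjBy
      rw [gen_mul, gen_mul, Cid G r pa d hd h3 hxy])

theorem PhiH_of (h3 : ∀ x y, G.Adj x y → ¬ inT r pa x y →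
      ∃ s, G.Adj x s ∧ G.Adj y s ∧ inT r pa x s ∧ inT r pa y s) (z : V) :
    PhiH G r pa d hd h3 (PresentedGroup.of z) =
      inl (nw G r pa d hd z) * inr (Multiplicative.ofAdd 1) := raagLift_of _ _ _

/-- generators of `RAAG G`. -/
abbrev ofG (z : V) : RAAG G := PresentedGroup.of (rels := raagRels G) z

/-- the homomorphism `RAAG Δ → RAAG G`. -/
def PsiN (hadj : ∀ z, z ≠ r → G.Adj (pa z) z) : RAAG (Delta G r pa) →* RAAG G :=
  raagLift (fun w => ofG G w.1 * (ofG G (pa w.1))⁻¹)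
    (by
      intro w w' hD
      obtain ⟨-, -, gpp, gpv, gvp, gvv⟩ := hD
      have cpp := good_commute gpp
      have cpv := good_commute gpv
      have cvp := good_commute gvp
      have cvv := good_commute gvv
      have h1 : Commute (ofG G w.1) (ofG G w'.1 * (ofG G (pa w'.1))⁻¹) :=
        cvv.mul_right cvp.inv_right
      have h2 : Commute ((ofG G (pa w.1))⁻¹) (ofG G w'.1 * (ofG G (pa w'.1))⁻¹) :=
        (cpv.mul_right cpp.inv_right).inv_left
      exact h1.mul_left h2)

theorem PsiN_of (hadj : ∀ z, z ≠ r → G.Adj (pa z) z) (w : {z : V // z ≠ r}) :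
    PsiN G r pa hadj (ofD G r pa w) = ofG G w.1 * (ofG G (pa w.1))⁻¹ := raagLift_of _ _ _

theorem PsiN_nw (hadj : ∀ z, z ≠ r → G.Adj (pa z) z) (z : V) :
    PsiN G r pa hadj (nw G r pa d hd z) = ofG G z * (ofG G r)⁻¹ := by
  by_cases h : z = r
  · subst h; rw [nw_r, map_one]; group
  · rw [nw_ne G r pa d hd h, map_mul, PsiN_nw hadj (pa z), PsiN_of]
    group
termination_by d z
decreasing_by rw [hd z h]; omega

theorem key1 (hadj : ∀ z, z ≠ r → G.Adj (pa z) z) (x : RAAG (Delta G r pa)) :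
    PsiN G r pa hadj (sigmaH G r pa d hd x) =
      ofG G r * PsiN G r pa hadj x * (ofG G r)⁻¹ := by
  have heq : (PsiN G r pa hadj).comp (sigmaH G r pa d hd) =
      ((MulAut.conj (ofG G r)).toMonoidHom).comp (PsiN G r pa hadj) := by
    apply PresentedGroup.ext
    intro w
    show PsiN G r pa hadj (sigmaH G r pa d hd (ofD G r pa w)) =
      MulAut.conj (ofG G r) (PsiN G r pa hadj (ofD G r pa w))
    rw [sigmaH_of, sigmaf, map_mul, map_mul, map_inv, PsiN_nw, PsiN_of, MulAut.conj_apply]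
    have hc : Commute (ofG G (pa w.1)) (ofG G w.1) := by
      by_cases hwr : w.1 = r
      · exact absurd hwr w.2
      · exact raag_commute (hadj w.1 w.2)
    have hc2 : (ofG G (pa w.1))⁻¹ * ofG G w.1 = ofG G w.1 * (ofG G (pa w.1))⁻¹ :=
      hc.inv_left.eq
    calc (ofG G (pa w.1) * (ofG G r)⁻¹)⁻¹ * (ofG G w.1 * (ofG G (pa w.1))⁻¹) *
          (ofG G (pa w.1) * (ofG G r)⁻¹)
        = ofG G r * ((ofG G (pa w.1))⁻¹ * ofG G w.1) * (ofG G r)⁻¹ := by group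
      _ = ofG G r * (ofG G w.1 * (ofG G (pa w.1))⁻¹) * (ofG G r)⁻¹ := by rw [hc2]
  have := DFunLike.congr_fun heq x
  simpa using this

theorem key1' (hadj : ∀ z, z ≠ r → G.Adj (pa z) z) (x : RAAG (Delta G r pa)) :
    PsiN G r pa hadj (tauH G r pa d hd x) =
      (ofG G r)⁻¹ * PsiN G r pa hadj x * ofG G r := by
  have := key1 G r pa d hd hadj (tauH G r pa d hd x)
  rw [sigma_tau] at this
  rw [this]; group

theorem keyZ (hadj : ∀ z, z ≠ r → G.Adj (pa z) z) (k : ℤ) (x : RAAG (Delta G r pa)) :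
    PsiN G r pa hadj ((sigmaE G r pa d hd ^ k) x) =
      (ofG G r) ^ k * PsiN G r pa hadj x * ((ofG G r) ^ k)⁻¹ := by
  induction k using Int.induction_on generalizing x with
  | zero => simp
  | succ k ih =>
    have hsplit : (sigmaE G r pa d hd ^ ((k : ℤ) + 1)) x =
        (sigmaE G r pa d hd ^ (k : ℤ)) (sigmaE G r pa d hd x) := by
      rw [zpow_add_one]
      rfl
    rw [hsplit, ih, sigmaE_apply, key1, zpow_add_one]
    group
  | pred k ih =>
    have hsplit : (sigmaE G r pa d hd ^ (-(k : ℤ) - 1)) x =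
        (sigmaE G r pa d hd ^ (-(k : ℤ))) (tauH G r pa d hd x) := by
      rw [zpow_sub_one]
      rfl
    rw [hsplit, ih, key1', zpow_sub_one]
    group

end Iso

section Final

open SemidirectProduct

variable (hadj : ∀ z, z ≠ r → G.Adj (pa z) z)
variable (h3 : ∀ x y, G.Adj x y → ¬ inT r pa x y →
    ∃ s, G.Adj x s ∧ G.Adj y s ∧ inT r pa x s ∧ inT r pa y s)

/-- the `ℤ` part of the inverse map, sending the generator to the root generator. -/
def PsiZ : Multiplicative ℤ →* RAAG G := zpowersHom (RAAG G) (ofG G r)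

theorem psi_compat : ∀ g : Multiplicative ℤ,
    (PsiN G r pa hadj).comp ((phiZ G r pa d hd g).toMonoidHom) =
      ((MulAut.conj (PsiZ G r g)).toMonoidHom).comp (PsiN G r pa hadj) := by
  intro g
  apply MonoidHom.ext
  intro x
  show PsiN G r pa hadj ((sigmaE G r pa d hd ^ g.toAdd) x) =
    MulAut.conj ((ofG G r) ^ g.toAdd) (PsiN G r pa hadj x)
  rw [keyZ G r pa d hd hadj g.toAdd x, MulAut.conj_apply]

/-- the homomorphism `RAAG Δ ⋊ ℤ → RAAG G`. -/
def PsiH : SD G r pa d hd →* RAAG G :=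
  SemidirectProduct.lift (PsiN G r pa hadj) (PsiZ G r) (psi_compat G r pa d hd hadj)

theorem psi_phi : (PsiH G r pa d hd hadj).comp (PhiH G r pa d hd h3) =
    MonoidHom.id (RAAG G) := by
  apply PresentedGroup.ext
  intro z
  show PsiH G r pa d hd hadj (PhiH G r pa d hd h3 (PresentedGroup.of z)) = ofG G z
  rw [PhiH_of, map_mul]
  simp only [PsiH, lift_inl, lift_inr, PsiZ, zpowersHom_apply, toAdd_ofAdd,
    zpow_one]
  rw [PsiN_nw]
  group

theorem phi_psi : (PhiH G r pa d hd h3).comp (PsiH G r pa d hd hadj) =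
    MonoidHom.id (SD G r pa d hd) := by
  apply SemidirectProduct.hom_ext
  · apply PresentedGroup.ext
    intro w
    show PhiH G r pa d hd h3 (PsiH G r pa d hd hadj (inl (ofD G r pa w))) = inl (ofD G r pa w)
    simp only [PsiH, lift_inl]
    rw [PsiN_of, map_mul, map_inv, PhiH_of, PhiH_of]
    have ha : nw G r pa d hd w.1 = ofD G r pa w * nw G r pa d hd (pa w.1) :=
      nw_ne G r pa d hd w.2
    calc ((inl (nw G r pa d hd w.1) * inr (Multiplicative.ofAdd (1 : ℤ))) *
          (inl (nw G r pa d hd (pa w.1)) * inr (Multiplicative.ofAdd (1 : ℤ)))⁻¹ :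
            SD G r pa d hd)
        = inl (nw G r pa d hd w.1) * (inl (nw G r pa d hd (pa w.1)))⁻¹ := by group
      _ = inl (nw G r pa d hd w.1 * (nw G r pa d hd (pa w.1))⁻¹) := by
          rw [map_mul, map_inv]
      _ = inl (ofD G r pa w) := by rw [ha]; group
  · apply MonoidHom.ext_mint
    show PhiH G r pa d hd h3 (PsiH G r pa d hd hadj (inr (Multiplicative.ofAdd 1))) =
      inr (Multiplicative.ofAdd 1)
    simp only [PsiH, lift_inr, PsiZ, zpowersHom_apply, toAdd_ofAdd, zpow_one]
    rw [PhiH_of G r pa d hd h3 r, nw_r, map_one, one_mul]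

/-- the isomorphism `RAAG G ≃* RAAG Δ ⋊ ℤ`. -/
def PhiE : RAAG G ≃* SD G r pa d hd :=
  MonoidHom.toMulEquiv (PhiH G r pa d hd h3) (PsiH G r pa d hd hadj)
    (psi_phi G r pa d hd hadj h3) (phi_psi G r pa d hd hadj h3)

theorem char_compat (x : RAAG G) :
    rightHom (PhiE G r pa d hd hadj h3 x) = bbgChar G x := by
  have : (rightHom (φ := phiZ G r pa d hd)).comp (PhiH G r pa d hd h3) = bbgChar G := by
    apply PresentedGroup.ext
    intro z
    show rightHom (PhiH G r pa d hd h3 (PresentedGroup.of z)) =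
      bbgChar G (PresentedGroup.of z)
    rw [PhiH_of, map_mul, rightHom_inl, rightHom_inr, one_mul]
    simp [bbgChar]
  exact DFunLike.congr_fun this x

theorem bbg_map_eq : (BBG G).map ((PhiE G r pa d hd hadj h3 : RAAG G ≃* SD G r pa d hd) :
    RAAG G →* SD G r pa d hd) = (rightHom (φ := phiZ G r pa d hd)).ker := by
  ext x
  constructor
  · rintro ⟨y, hy, rfl⟩
    have h1 : bbgChar G y = 1 := hy
    show rightHom ((PhiE G r pa d hd hadj h3 : RAAG G →* SD G r pa d hd) y) = 1
    have h2 : (PhiE G r pa d hd hadj h3 : RAAG G →* SD G r pa d hd) y =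
        PhiE G r pa d hd hadj h3 y := rfl
    rw [h2, char_compat G r pa d hd hadj h3 y]
    exact h1
  · intro hx
    refine ⟨(PhiE G r pa d hd hadj h3).symm x, ?_, by simp⟩
    show bbgChar G _ = 1
    rw [← char_compat G r pa d hd hadj h3 ((PhiE G r pa d hd hadj h3).symm x)]
    simp only [MulEquiv.apply_symm_apply]
    exact hx

/-- Part B conclusion: the Bestvina–Brady group is isomorphic to `RAAG Δ`. -/
noncomputable def bbgIso : ↥(BBG G) ≃* RAAG (Delta G r pa) :=
  ((PhiE G r pa d hd hadj h3).subgroupMap (BBG G)).trans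
    ((MulEquiv.subgroupCongr (bbg_map_eq G r pa d hd hadj h3)).trans
      ((MulEquiv.subgroupCongr (range_inl_eq_ker_rightHom (φ := phiZ G r pa d hd)).symm).trans
        (MonoidHom.ofInjective (inl_injective (φ := phiZ G r pa d hd))).symm))

end Final

end PartB


/-- Part B: a graph with a triangle-spanning-tree structure has RAAG Bestvina–Brady group. -/
theorem partB {V : Type} [Fintype V] (G : SimpleGraph V) (r : V) (pa : V → V) (d : V → ℕ)
    (hadj : ∀ z, z ≠ r → G.Adj (pa z) z)
    (hd : ∀ z, z ≠ r → d z = d (pa z) + 1)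
    (h3 : ∀ x y, G.Adj x y → ¬ inT r pa x y →
      ∃ s, G.Adj x s ∧ G.Adj y s ∧ inT r pa x s ∧ inT r pa y s) :
    IsRAAG ↥(BBG G) := by
  classical
  exact ⟨{z : V // z ≠ r}, Subtype.fintype _, Delta G r pa,
    ⟨bbgIso G r pa d hd hadj h3⟩⟩

/-! ### Part A : combinatorics of trefoil-free 2-trees -/

/-- attach a new vertex to each pair in `F`. -/
def AttachAll {V : Type} (G : SimpleGraph V) (F : Set (V × V)) :
    SimpleGraph (V ⊕ (V × V)) :=
  SimpleGraph.fromRel (fun x y =>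
    (∃ a b : V, x = Sum.inl a ∧ y = Sum.inl b ∧ G.Adj a b) ∨
    (∃ p : V × V, p ∈ F ∧ x = Sum.inr p ∧ (y = Sum.inl p.1 ∨ y = Sum.inl p.2)))

section AdjLemmas

variable {V : Type} {G : SimpleGraph V} {F : Set (V × V)} {u w : V}

theorem addVertex_adj_some_some {a b : V} :
    (addVertexTwoEdges G u w).Adj (some a) (some b) ↔ G.Adj a b := by
  constructor
  · rintro ⟨hne, (⟨a', b', ha, hb, hab⟩ | ⟨h, -⟩) | (⟨a', b', ha, hb, hab⟩ | ⟨h, -⟩)⟩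
    · cases ha; cases hb; exact hab
    · cases h
    · cases ha; cases hb; exact hab.symm
    · cases h
  · intro h
    exact ⟨by simpa using h.ne, Or.inl (Or.inl ⟨a, b, rfl, rfl, h⟩)⟩

theorem addVertex_adj_none_some {a : V} :
    (addVertexTwoEdges G u w).Adj none (some a) ↔ (a = u ∨ a = w) := by
  constructor
  · rintro ⟨hne, (⟨a', b', ha, -, -⟩ | ⟨-, hy⟩) | (⟨a', b', -, hb, -⟩ | ⟨h, -⟩)⟩
    · cases ha
    · rcases hy with h | h
      · exact Or.inl (by injection h)
      · exact Or.inr (by injection h)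
    · cases hb
    · cases h
  · rintro (rfl | rfl)
    · exact ⟨by simp, Or.inl (Or.inr ⟨rfl, Or.inl rfl⟩)⟩
    · exact ⟨by simp, Or.inl (Or.inr ⟨rfl, Or.inr rfl⟩)⟩

theorem addVertex_adj_some_none {a : V} :
    (addVertexTwoEdges G u w).Adj (some a) none ↔ (a = u ∨ a = w) := by
  rw [SimpleGraph.adj_comm]; exact addVertex_adj_none_some

theorem attach_adj_inl_inl {a b : V} :
    (AttachAll G F).Adj (Sum.inl a) (Sum.inl b) ↔ G.Adj a b := by
  constructor
  · rintro ⟨hne, (⟨a', b', ha, hb, hab⟩ | ⟨p, -, hp, -⟩) | (⟨a', b', ha, hb, hab⟩ | ⟨p, -, hp, -⟩)⟩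
    · cases ha; cases hb; exact hab
    · cases hp
    · cases ha; cases hb; exact hab.symm
    · cases hp
  · intro h
    exact ⟨by simpa using h.ne, Or.inl (Or.inl ⟨a, b, rfl, rfl, h⟩)⟩

theorem attach_adj_inr_inl {p : V × V} {a : V} :
    (AttachAll G F).Adj (Sum.inr p) (Sum.inl a) ↔ p ∈ F ∧ (a = p.1 ∨ a = p.2) := by
  constructor
  · rintro ⟨hne, (⟨a', b', ha, -, -⟩ | ⟨q, hq, hp, hy⟩) | (⟨a', b', -, hb, -⟩ | ⟨q, hq, hp, hy⟩)⟩
    · cases ha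
    · cases hp
      rcases hy with h | h
      · exact ⟨hq, Or.inl (by injection h)⟩
      · exact ⟨hq, Or.inr (by injection h)⟩
    · cases hb
    · cases hp
  · rintro ⟨hp, (rfl | rfl)⟩
    · exact ⟨by simp, Or.inl (Or.inr ⟨p, hp, rfl, Or.inl rfl⟩)⟩
    · exact ⟨by simp, Or.inl (Or.inr ⟨p, hp, rfl, Or.inr rfl⟩)⟩

theorem attach_adj_inl_inr {p : V × V} {a : V} :
    (AttachAll G F).Adj (Sum.inl a) (Sum.inr p) ↔ p ∈ F ∧ (a = p.1 ∨ a = p.2) := by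
  rw [SimpleGraph.adj_comm]; exact attach_adj_inr_inl

theorem attach_not_adj_inr_inr {p q : V × V} :
    ¬ (AttachAll G F).Adj (Sum.inr p) (Sum.inr q) := by
  rintro ⟨hne, (⟨a', b', ha, -, -⟩ | ⟨q', -, -, hy⟩) | (⟨a', b', ha, -, -⟩ | ⟨q', -, -, hy⟩)⟩
  · cases ha
  · rcases hy with h | h <;> cases h
  · cases ha
  · rcases hy with h | h <;> cases h

end AdjLemmas

theorem trefoil_mono {V W : Type} {G : SimpleGraph V} {H : SimpleGraph W} (f : V → W)
    (hinj : Function.Injective f) (hadj : ∀ a b, G.Adj a b → H.Adj (f a) (f b)) :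
    ContainsTrefoil G → ContainsTrefoil H := by
  rintro ⟨a, b, c, x, y, z, hinj6, h1, h2, h3, h4, h5, h6, h7, h8, h9⟩
  refine ⟨f a, f b, f c, f x, f y, f z, ?_, hadj _ _ h1, hadj _ _ h2, hadj _ _ h3,
    hadj _ _ h4, hadj _ _ h5, hadj _ _ h6, hadj _ _ h7, hadj _ _ h8, hadj _ _ h9⟩
  have : ![f a, f b, f c, f x, f y, f z] = f ∘ ![a, b, c, x, y, z] := by
    funext i; fin_cases i <;> rfl
  rw [this]
  exact hinj.comp hinj6

theorem inj6 {α : Type} {a b c x y z : α}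
    (hab : a ≠ b) (hac : a ≠ c) (hax : a ≠ x) (hay : a ≠ y) (haz : a ≠ z)
    (hbc : b ≠ c) (hbx : b ≠ x) (hby : b ≠ y) (hbz : b ≠ z)
    (hcx : c ≠ x) (hcy : c ≠ y) (hcz : c ≠ z)
    (hxy : x ≠ y) (hxz : x ≠ z) (hyz : y ≠ z) :
    Function.Injective ![a, b, c, x, y, z] := by
  intro i j hij
  fin_cases i <;> fin_cases j <;>
    first
      | rfl
      | (exfalso; revert hij;
         first
           | exact fun h => hab h | exact fun h => hac h | exact fun h => hax h
           | exact fun h => hay h | exact fun h => haz h | exact fun h => hbc h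
           | exact fun h => hbx h | exact fun h => hby h | exact fun h => hbz h
           | exact fun h => hcx h | exact fun h => hcy h | exact fun h => hcz h
           | exact fun h => hxy h | exact fun h => hxz h | exact fun h => hyz h
           | exact fun h => hab h.symm | exact fun h => hac h.symm | exact fun h => hax h.symm
           | exact fun h => hay h.symm | exact fun h => haz h.symm | exact fun h => hbc h.symm
           | exact fun h => hbx h.symm | exact fun h => hby h.symm | exact fun h => hbz h.symm
           | exact fun h => hcx h.symm | exact fun h => hcy h.symm | exact fun h => hcz h.symm
           | exact fun h => hxy h.symm | exact fun h => hxz h.symm | exact fun h => hyz h.symm)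

theorem tri_or_k2 {V : Type} {G : SimpleGraph V} (h2 : Is2Tree G) :
    ∀ u w, G.Adj u w → (∃ x, G.Adj u x ∧ G.Adj w x) ∨ (∀ z : V, z = u ∨ z = w) := by
  induction h2 with
  | base =>
    intro u w huw
    right
    have hne : u ≠ w := huw.ne
    have : ∀ z u w : Fin 2, u ≠ w → z = u ∨ z = w := by decide
    exact fun z => this z u w hne
  | extend G u w huw hG ih =>
    intro a b hab
    match a, b with
    | none, none => exact absurd rfl hab.ne
    | none, some b' =>
      left
      rcases addVertex_adj_none_some.1 hab with rfl | rfl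
      · exact ⟨some w, addVertex_adj_none_some.2 (Or.inr rfl), addVertex_adj_some_some.2 huw⟩
      · exact ⟨some u, addVertex_adj_none_some.2 (Or.inl rfl),
          addVertex_adj_some_some.2 huw.symm⟩
    | some a', none =>
      left
      rcases addVertex_adj_some_none.1 hab with rfl | rfl
      · exact ⟨some w, addVertex_adj_some_some.2 huw, addVertex_adj_none_some.2 (Or.inr rfl)⟩
      · exact ⟨some u, addVertex_adj_some_some.2 huw.symm,
          addVertex_adj_none_some.2 (Or.inl rfl)⟩
    | some a', some b' =>
      have hab' := addVertex_adj_some_some.1 hab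
      rcases ih a' b' hab' with ⟨x, h1, h2⟩ | hK
      · exact Or.inl ⟨some x, addVertex_adj_some_some.2 h1, addVertex_adj_some_some.2 h2⟩
      · left
        rcases hK u with h1 | h1 <;> rcases hK w with h2 | h2
        · exact absurd (h1.trans h2.symm) huw.ne
        · exact ⟨none, addVertex_adj_some_none.2 (Or.inl h1.symm),
            addVertex_adj_some_none.2 (Or.inr h2.symm)⟩
        · exact ⟨none, addVertex_adj_some_none.2 (Or.inr h2.symm),
            addVertex_adj_some_none.2 (Or.inl h1.symm)⟩
        · exact absurd (h1.trans h2.symm) huw.ne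
  | iso G H hG h ih =>
    obtain ⟨e⟩ := h
    intro u w huw
    have h1 : G.Adj (e.symm u) (e.symm w) := by
      have := e.symm.map_rel_iff (a := u) (b := w)
      exact this.2 huw
    rcases ih _ _ h1 with ⟨x, hx1, hx2⟩ | hK
    · left
      refine ⟨e x, ?_, ?_⟩
      · have := e.map_rel_iff (a := e.symm u) (b := x)
        have h2 := this.2 hx1
        rwa [e.apply_symm_apply] at h2
      · have := e.map_rel_iff (a := e.symm w) (b := x)
        have h2 := this.2 hx2
        rwa [e.apply_symm_apply] at h2
    · right
      intro z
      rcases hK (e.symm z) with h | h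
      · exact Or.inl (by simpa using congrArg e h)
      · exact Or.inr (by simpa using congrArg e h)

theorem extend_tree {V : Type} {G : SimpleGraph V} {u w e0 e1 : V} (huw : G.Adj u w)
    (he : (e0 = u ∧ e1 = w) ∨ (e0 = w ∧ e1 = u))
    (r : V) (pa : V → V) (d : V → ℕ)
    (hadj : ∀ z, z ≠ r → G.Adj (pa z) z) (hd : ∀ z, z ≠ r → d z = d (pa z) + 1)
    (h3 : ∀ x y, G.Adj x y → ¬ inT r pa x y →
      ∃ s, G.Adj x s ∧ G.Adj y s ∧ inT r pa x s ∧ inT r pa y s)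
    (hT : inT r pa u w) :
    ∃ (r' : Option V) (pa' : Option V → Option V) (d' : Option V → ℕ),
      r' = some r ∧
      (∀ z, z ≠ r' → (addVertexTwoEdges G u w).Adj (pa' z) z) ∧
      (∀ z, z ≠ r' → d' z = d' (pa' z) + 1) ∧
      (∀ x y, (addVertexTwoEdges G u w).Adj x y → ¬ inT r' pa' x y →
        ∃ s, (addVertexTwoEdges G u w).Adj x s ∧ (addVertexTwoEdges G u w).Adj y s ∧
          inT r' pa' x s ∧ inT r' pa' y s) ∧
      (∀ a b, inT r pa a b → inT r' pa' (some a) (some b)) ∧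
      inT r' pa' none (some e0) := by
  classical
  have he0 : e0 = u ∨ e0 = w := he.elim (fun h => Or.inl h.1) (fun h => Or.inr h.1)
  have he1 : G.Adj e1 e0 := by
    rcases he with ⟨rfl, rfl⟩ | ⟨rfl, rfl⟩
    · exact huw.symm
    · exact huw
  have hT10 : inT r pa e1 e0 := by
    rcases he with ⟨rfl, rfl⟩ | ⟨rfl, rfl⟩
    · exact inT_symm hT
    · exact hT
  set pa' : Option V → Option V := fun x => Option.elim x (some e0) (fun z => some (pa z))
    with hpa'
  set d' : Option V → ℕ := fun x => Option.elim x (d e0 + 1) d with hd'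
  have hlift : ∀ a b : V, inT r pa a b → inT (some r) pa' (some a) (some b) := by
    rintro a b (⟨h1, h2⟩ | ⟨h1, h2⟩)
    · exact Or.inl ⟨by simp [hpa', h1], by simpa using h2⟩
    · exact Or.inr ⟨by simp [hpa', h1], by simpa using h2⟩
  have hdown : ∀ a b : V, inT (some r) pa' (some a) (some b) → inT r pa a b := by
    rintro a b (⟨h1, h2⟩ | ⟨h1, h2⟩)
    · exact Or.inl ⟨by simpa [hpa'] using h1, by simpa using h2⟩
    · exact Or.inr ⟨by simpa [hpa'] using h1, by simpa using h2⟩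
  have hTe0 : inT (some r) pa' none (some e0) := Or.inr ⟨by simp [hpa'], by simp⟩
  refine ⟨some r, pa', d', rfl, ?_, ?_, ?_, hlift, hTe0⟩
  · intro z hz
    match z with
    | none => exact addVertex_adj_some_none.2 he0
    | some z' =>
      have hz' : z' ≠ r := fun h => hz (by rw [h])
      exact addVertex_adj_some_some.2 (hadj z' hz')
  · intro z hz
    match z with
    | none => simp [hpa', hd']
    | some z' =>
      have hz' : z' ≠ r := fun h => hz (by rw [h])
      simpa [hpa', hd'] using hd z' hz'
  · intro x y hxy hnT
    match x, y with
    | none, none => exact absurd rfl hxy.ne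
    | none, some b =>
      have hb : b = u ∨ b = w := addVertex_adj_none_some.1 hxy
      have hb' : b = e0 ∨ b = e1 := by
        rcases he with ⟨rfl, rfl⟩ | ⟨rfl, rfl⟩
        · exact hb
        · exact hb.symm
      rcases hb' with rfl | rfl
      · exact absurd hTe0 hnT
      · refine ⟨some e0, addVertex_adj_none_some.2 he0,
          addVertex_adj_some_some.2 he1, hTe0, hlift _ _ hT10⟩
    | some a, none =>
      have hb : a = u ∨ a = w := addVertex_adj_some_none.1 hxy
      have hb' : a = e0 ∨ a = e1 := by
        rcases he with ⟨rfl, rfl⟩ | ⟨rfl, rfl⟩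
        · exact hb
        · exact hb.symm
      rcases hb' with rfl | rfl
      · exact absurd (inT_symm hTe0) hnT
      · refine ⟨some e0, addVertex_adj_some_some.2 he1,
          addVertex_adj_none_some.2 he0, hlift _ _ hT10, hTe0⟩
    | some a, some b =>
      have hab := addVertex_adj_some_some.1 hxy
      have hnT' : ¬ inT r pa a b := fun h => hnT (hlift _ _ h)
      obtain ⟨s, hs1, hs2, hs3, hs4⟩ := h3 a b hab hnT'
      exact ⟨some s, addVertex_adj_some_some.2 hs1, addVertex_adj_some_some.2 hs2,
        hlift _ _ hs3, hlift _ _ hs4⟩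

theorem partA {V : Type} {G : SimpleGraph V} (h2 : Is2Tree G) :
    ∀ F : Set (V × V), (∀ p ∈ F, G.Adj p.1 p.2) →
    ¬ContainsTrefoil (AttachAll G F) →
    ∃ (r : V) (pa : V → V) (d : V → ℕ),
      (∀ z, z ≠ r → G.Adj (pa z) z) ∧ (∀ z, z ≠ r → d z = d (pa z) + 1) ∧
      (∀ x y, G.Adj x y → ¬ inT r pa x y →
        ∃ s, G.Adj x s ∧ G.Adj y s ∧ inT r pa x s ∧ inT r pa y s) ∧
      (∀ p ∈ F, inT r pa p.1 p.2) := by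
  induction h2 with
  | base =>
    intro F hwf htre
    have key : ∀ x y : Fin 2, x ≠ y → inT 0 (fun _ => (0 : Fin 2)) x y := by
      have h0 : ∀ x y : Fin 2, x ≠ y →
          (((0:Fin 2) = x ∧ y ≠ 0) ∨ ((0:Fin 2) = y ∧ x ≠ 0)) := by decide
      intro x y h
      exact h0 x y h
    refine ⟨0, fun _ => 0, fun z => if z = 0 then 0 else 1, ?_, ?_, ?_, ?_⟩
    · intro z hz
      exact (SimpleGraph.top_adj _ _).2 (Ne.symm hz)
    · intro z hz
      simp [hz]
    · intro x y hxy hnT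
      exact absurd (key x y hxy.ne) hnT
    · intro p hp
      exact key p.1 p.2 (hwf p hp).ne
  | @extend V G u w huw hG ih =>
    intro F' hwf' htre'
    classical
    by_cases hcase : ((none, some u) ∈ F' ∨ (some u, none) ∈ F') ∧
        ((none, some w) ∈ F' ∨ (some w, none) ∈ F')
    · -- both edges at the new vertex are attached
      obtain ⟨hcu, hcw⟩ := hcase
      obtain ⟨p1, hp1F, hp1⟩ : ∃ p1, p1 ∈ F' ∧
          (p1 = ((none : Option V), some u) ∨ p1 = (some u, none)) := by
        rcases hcu with h | h
        exacts [⟨_, h, Or.inl rfl⟩, ⟨_, h, Or.inr rfl⟩]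
      obtain ⟨p2, hp2F, hp2⟩ : ∃ p2, p2 ∈ F' ∧
          (p2 = ((none : Option V), some w) ∨ p2 = (some w, none)) := by
        rcases hcw with h | h
        exacts [⟨_, h, Or.inl rfl⟩, ⟨_, h, Or.inr rfl⟩]
      have hp1u : (AttachAll (addVertexTwoEdges G u w) F').Adj (Sum.inr p1) (Sum.inl (some u)) := by
        rcases hp1 with rfl | rfl
        · exact attach_adj_inr_inl.2 ⟨hp1F, Or.inr rfl⟩
        · exact attach_adj_inr_inl.2 ⟨hp1F, Or.inl rfl⟩
      have hp1v : (AttachAll (addVertexTwoEdges G u w) F').Adj (Sum.inr p1) (Sum.inl none) := by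
        rcases hp1 with rfl | rfl
        · exact attach_adj_inr_inl.2 ⟨hp1F, Or.inl rfl⟩
        · exact attach_adj_inr_inl.2 ⟨hp1F, Or.inr rfl⟩
      have hp2w : (AttachAll (addVertexTwoEdges G u w) F').Adj (Sum.inr p2) (Sum.inl (some w)) := by
        rcases hp2 with rfl | rfl
        · exact attach_adj_inr_inl.2 ⟨hp2F, Or.inr rfl⟩
        · exact attach_adj_inr_inl.2 ⟨hp2F, Or.inl rfl⟩
      have hp2v : (AttachAll (addVertexTwoEdges G u w) F').Adj (Sum.inr p2) (Sum.inl none) := by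
        rcases hp2 with rfl | rfl
        · exact attach_adj_inr_inl.2 ⟨hp2F, Or.inl rfl⟩
        · exact attach_adj_inr_inl.2 ⟨hp2F, Or.inr rfl⟩
      have hp12 : p1 ≠ p2 := by
        rcases hp1 with rfl | rfl <;> rcases hp2 with rfl | rfl <;>
          simp [Prod.ext_iff, huw.ne]
      rcases tri_or_k2 hG u w huw with ⟨x0, hux0, hwx0⟩ | hK2
      · -- a triangle on the base edge: trefoil, contradiction
        exfalso
        apply htre'
        refine ⟨Sum.inl (some u), Sum.inl none, Sum.inl (some w), Sum.inr p1, Sum.inr p2,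
          Sum.inl (some x0), ?_, ?_, ?_, ?_, hp1u, hp1v, hp2v, hp2w, ?_, ?_⟩
        · refine inj6 ?_ ?_ ?_ ?_ ?_ ?_ ?_ ?_ ?_ ?_ ?_ ?_ ?_ ?_ ?_ <;>
            simp [huw.ne, hux0.ne, hwx0.ne, hp12]
        · exact attach_adj_inl_inl.2 (addVertex_adj_some_none.2 (Or.inl rfl))
        · exact attach_adj_inl_inl.2 (addVertex_adj_none_some.2 (Or.inr rfl))
        · exact attach_adj_inl_inl.2 (addVertex_adj_some_some.2 huw.symm)
        · exact attach_adj_inl_inl.2 (addVertex_adj_some_some.2 hwx0.symm)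
        · exact attach_adj_inl_inl.2 (addVertex_adj_some_some.2 hux0.symm)
      · -- K2 base
        by_cases hcuw : ((some u, some w) ∈ F' ∨ ((some w : Option V), some u) ∈ F')
        · -- all three edges of the triangle attached: trefoil
          exfalso
          obtain ⟨p3, hp3F, hp3⟩ : ∃ p3, p3 ∈ F' ∧
              (p3 = ((some u : Option V), some w) ∨ p3 = (some w, some u)) := by
            rcases hcuw with h | h
            exacts [⟨_, h, Or.inl rfl⟩, ⟨_, h, Or.inr rfl⟩]
          have hp3u : (AttachAll (addVertexTwoEdges G u w) F').Adj (Sum.inr p3) (Sum.inl (some u)) := by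
            rcases hp3 with rfl | rfl
            · exact attach_adj_inr_inl.2 ⟨hp3F, Or.inl rfl⟩
            · exact attach_adj_inr_inl.2 ⟨hp3F, Or.inr rfl⟩
          have hp3w : (AttachAll (addVertexTwoEdges G u w) F').Adj (Sum.inr p3) (Sum.inl (some w)) := by
            rcases hp3 with rfl | rfl
            · exact attach_adj_inr_inl.2 ⟨hp3F, Or.inr rfl⟩
            · exact attach_adj_inr_inl.2 ⟨hp3F, Or.inl rfl⟩
          have hp13 : p1 ≠ p3 := by
            rcases hp1 with rfl | rfl <;> rcases hp3 with rfl | rfl <;>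
              simp [Prod.ext_iff]
          have hp23 : p2 ≠ p3 := by
            rcases hp2 with rfl | rfl <;> rcases hp3 with rfl | rfl <;>
              simp [Prod.ext_iff]
          apply htre'
          refine ⟨Sum.inl (some u), Sum.inl none, Sum.inl (some w), Sum.inr p1, Sum.inr p2,
            Sum.inr p3, ?_, ?_, ?_, ?_, hp1u, hp1v, hp2v, hp2w, hp3w, hp3u⟩
          · refine inj6 ?_ ?_ ?_ ?_ ?_ ?_ ?_ ?_ ?_ ?_ ?_ ?_ ?_ ?_ ?_ <;>
              simp [huw.ne, hp12, hp13, hp23]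
          · exact attach_adj_inl_inl.2 (addVertex_adj_some_none.2 (Or.inl rfl))
          · exact attach_adj_inl_inl.2 (addVertex_adj_none_some.2 (Or.inr rfl))
          · exact attach_adj_inl_inl.2 (addVertex_adj_some_some.2 huw.symm)
        · -- direct tree for the triangle
          refine ⟨some u, fun x => Option.elim x (some u) (fun z => if z = w then none
              else some u), fun x => Option.elim x 1 (fun z => if z = w then 2 else 0),
              ?_, ?_, ?_, ?_⟩
          · intro z hz
            match z with
            | none => exact addVertex_adj_some_none.2 (Or.inl rfl)
            | some z' =>
              have hz' : z' ≠ u := fun h => hz (by rw [h])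
              have hzw : z' = w := (hK2 z').resolve_left hz'
              subst hzw
              simp only [Option.elim, if_pos rfl]
              exact addVertex_adj_none_some.2 (Or.inr rfl)
          · intro z hz
            match z with
            | none => simp [huw.ne]
            | some z' =>
              have hz' : z' ≠ u := fun h => hz (by rw [h])
              have hzw : z' = w := (hK2 z').resolve_left hz'
              subst hzw
              simp
          · intro x y hxy hnT
            match x, y with
            | none, none => exact absurd rfl hxy.ne
            | none, some b =>
              exfalso; apply hnT
              rcases addVertex_adj_none_some.1 hxy with rfl | rfl
              · exact Or.inr ⟨rfl, by simp⟩
              · exact Or.inl ⟨by simp, by simp [Ne.symm huw.ne]⟩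
            | some a, none =>
              exfalso; apply hnT
              rcases addVertex_adj_some_none.1 hxy with rfl | rfl
              · exact Or.inl ⟨rfl, by simp⟩
              · exact Or.inr ⟨by simp, by simp [Ne.symm huw.ne]⟩
            | some a, some b =>
              have hab := addVertex_adj_some_some.1 hxy
              have ha := hK2 a
              have hb := hK2 b
              have hTun : inT (some u) (fun x => Option.elim x (some u)
                  (fun z => if z = w then none else some u)) (some u) none :=
                Or.inl ⟨rfl, by simp⟩
              have hTwn : inT (some u) (fun x => Option.elim x (some u)
                  (fun z => if z = w then none else some u)) (some w) none :=
                Or.inr ⟨by simp, by simp [Ne.symm huw.ne]⟩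
              rcases ha with rfl | rfl <;> rcases hb with rfl | rfl
              · exact absurd rfl hab.ne
              · exact ⟨none, addVertex_adj_some_none.2 (Or.inl rfl),
                  addVertex_adj_some_none.2 (Or.inr rfl), hTun, hTwn⟩
              · exact ⟨none, addVertex_adj_some_none.2 (Or.inr rfl),
                  addVertex_adj_some_none.2 (Or.inl rfl), hTwn, hTun⟩
              · exact absurd rfl hab.ne
          · intro p hp
            have hadj'' := hwf' p hp
            have hTun : inT (some u) (fun x => Option.elim x (some u)
                (fun z => if z = w then none else some u)) (some u) none :=
              Or.inl ⟨rfl, by simp⟩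
            have hTwn : inT (some u) (fun x => Option.elim x (some u)
                (fun z => if z = w then none else some u)) (some w) none :=
              Or.inr ⟨by simp, by simp [Ne.symm huw.ne]⟩
            match p, hp, hadj'' with
            | (none, none), hp, hadj'' => exact absurd rfl hadj''.ne
            | (none, some b), hp, hadj'' =>
              rcases addVertex_adj_none_some.1 hadj'' with rfl | rfl
              · exact inT_symm hTun
              · exact inT_symm hTwn
            | (some a, none), hp, hadj'' =>
              rcases addVertex_adj_some_none.1 hadj'' with rfl | rfl
              · exact hTun
              · exact hTwn
            | (some a, some b), hp, hadj'' =>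
              exfalso
              have hab := addVertex_adj_some_some.1 hadj''
              rcases hK2 a with rfl | rfl <;> rcases hK2 b with rfl | rfl
              · exact hab.ne rfl
              · exact hcuw (Or.inl hp)
              · exact hcuw (Or.inr hp)
              · exact hab.ne rfl
    · -- main case: at most one of the two new edges is attached
      set F : Set (V × V) := {p : V × V | (some p.1, some p.2) ∈ F'} ∪ {(u, w)} with hF
      have hwf : ∀ p ∈ F, G.Adj p.1 p.2 := by
        rintro p (hp | hp)
        · exact addVertex_adj_some_some.1 (hwf' _ hp)
        · rw [Set.mem_singleton_iff] at hp
          rw [hp]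
          exact huw
      set f : V ⊕ (V × V) → (Option V) ⊕ (Option V × Option V) :=
        Sum.elim (fun z => Sum.inl (some z))
          (fun p => if p = (u, w) ∧ ((some u : Option V), some w) ∉ F' then Sum.inl none
            else Sum.inr (some p.1, some p.2)) with hf
      have hfinj : Function.Injective f := by
        intro x y hxy
        match x, y with
        | Sum.inl a, Sum.inl b => simpa [hf] using hxy
        | Sum.inl a, Sum.inr p =>
          exfalso
          by_cases h : p = (u, w) ∧ ((some u : Option V), some w) ∉ F' <;>
            simp [hf, h] at hxy
        | Sum.inr p, Sum.inl a =>
          exfalso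
          by_cases h : p = (u, w) ∧ ((some u : Option V), some w) ∉ F' <;>
            simp [hf, h] at hxy
        | Sum.inr p, Sum.inr q =>
          by_cases h : p = (u, w) ∧ ((some u : Option V), some w) ∉ F' <;>
            by_cases h' : q = (u, w) ∧ ((some u : Option V), some w) ∉ F'
          · rw [h.1, h'.1]
          · have hq : ¬ q = (u, w) := fun hh => h' ⟨hh, h.2⟩
            simp [hf, h, hq] at hxy
          · have hp : ¬ p = (u, w) := fun hh => h ⟨hh, h'.2⟩
            simp [hf, h', hp] at hxy
          · simp only [hf, Sum.elim_inr, if_neg h, if_neg h'] at hxy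
            have := Sum.inr_injective hxy
            have h1 : (some p.1 : Option V) = some q.1 := congrArg Prod.fst this
            have h2 : (some p.2 : Option V) = some q.2 := congrArg Prod.snd this
            exact congrArg Sum.inr (Prod.ext (Option.some_injective _ h1)
              (Option.some_injective _ h2))
      have hfadj : ∀ a b, (AttachAll G F).Adj a b →
          (AttachAll (addVertexTwoEdges G u w) F').Adj (f a) (f b) := by
        have main : ∀ (p : V × V) (z : V), p ∈ F → (z = p.1 ∨ z = p.2) →
            (AttachAll (addVertexTwoEdges G u w) F').Adj (f (Sum.inr p)) (f (Sum.inl z)) := by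
          intro p z hpF hz
          by_cases h : p = (u, w) ∧ ((some u : Option V), some w) ∉ F'
          · have hp : f (Sum.inr p) = Sum.inl none := by simp [hf, h]
            rw [hp]
            show (AttachAll (addVertexTwoEdges G u w) F').Adj (Sum.inl none) (Sum.inl (some z))
            apply attach_adj_inl_inl.2
            apply addVertex_adj_none_some.2
            rcases hz with rfl | rfl
            · rw [h.1]; exact Or.inl rfl
            · rw [h.1]; exact Or.inr rfl
          · have hp : f (Sum.inr p) = Sum.inr (some p.1, some p.2) := by simp [hf, h]
            rw [hp]
            apply attach_adj_inr_inl.2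
            constructor
            · rcases hpF with hpF | hpF
              · exact hpF
              · rw [Set.mem_singleton_iff] at hpF
                subst hpF
                by_contra hmem
                exact h ⟨rfl, hmem⟩
            · rcases hz with rfl | rfl
              · exact Or.inl rfl
              · exact Or.inr rfl
        intro a b hab
        match a, b with
        | Sum.inl z, Sum.inl z' =>
          exact attach_adj_inl_inl.2 (addVertex_adj_some_some.2 (attach_adj_inl_inl.1 hab))
        | Sum.inr p, Sum.inl z =>
          have h := attach_adj_inr_inl.1 hab
          exact main p z h.1 h.2
        | Sum.inl z, Sum.inr p =>
          have h := attach_adj_inl_inr.1 hab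
          exact (main p z h.1 h.2).symm
        | Sum.inr p, Sum.inr q => exact absurd hab attach_not_adj_inr_inr
      have htreF : ¬ContainsTrefoil (AttachAll G F) :=
        fun h => htre' (trefoil_mono f hfinj hfadj h)
      obtain ⟨r, pa, d, hadj, hd, h3, hFT⟩ := ih F hwf htreF
      have hTuw : inT r pa u w := hFT (u, w) (Or.inr rfl)
      by_cases hcvw : ((none, some w) ∈ F' ∨ ((some w : Option V), none) ∈ F')
      · -- the `vw` edge may be attached; root the new vertex at `w`
        have hncuv : ¬(((none : Option V), some u) ∈ F' ∨ ((some u : Option V), none) ∈ F') :=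
          fun h => hcase ⟨h, hcvw⟩
        obtain ⟨r', pa', d', hr'eq, hadj', hd', h3', hlift, hTe0⟩ :=
          extend_tree huw (Or.inr ⟨rfl, rfl⟩) r pa d hadj hd h3 hTuw
        refine ⟨r', pa', d', hadj', hd', h3', ?_⟩
        intro p hp
        have hadj'' := hwf' p hp
        match p, hp, hadj'' with
        | (none, none), hp, hadj'' => exact absurd rfl hadj''.ne
        | (some a, some b), hp, hadj'' =>
          exact hlift a b (hFT (a, b) (Or.inl hp))
        | (none, some b), hp, hadj'' =>
          rcases addVertex_adj_none_some.1 hadj'' with rfl | rfl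
          · exact absurd (Or.inl hp) hncuv
          · exact hTe0
        | (some a, none), hp, hadj'' =>
          rcases addVertex_adj_some_none.1 hadj'' with rfl | rfl
          · exact absurd (Or.inr hp) hncuv
          · exact inT_symm hTe0
      · -- root the new vertex at `u`
        obtain ⟨r', pa', d', hr'eq, hadj', hd', h3', hlift, hTe0⟩ :=
          extend_tree huw (Or.inl ⟨rfl, rfl⟩) r pa d hadj hd h3 hTuw
        refine ⟨r', pa', d', hadj', hd', h3', ?_⟩
        intro p hp
        have hadj'' := hwf' p hp
        match p, hp, hadj'' with
        | (none, none), hp, hadj'' => exact absurd rfl hadj''.ne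
        | (some a, some b), hp, hadj'' =>
          exact hlift a b (hFT (a, b) (Or.inl hp))
        | (none, some b), hp, hadj'' =>
          rcases addVertex_adj_none_some.1 hadj'' with rfl | rfl
          · exact hTe0
          · exact absurd (Or.inl hp) hcvw
        | (some a, none), hp, hadj'' =>
          rcases addVertex_adj_some_none.1 hadj'' with rfl | rfl
          · exact inT_symm hTe0
          · exact absurd (Or.inr hp) hcvw
  | @iso V W G H hG h ih =>
    obtain ⟨e⟩ := h
    intro F₂ hwf₂ htre₂
    classical
    set F : Set _ := {p : _ × _ | (e p.1, e p.2) ∈ F₂} with hFdef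
    have hwf : ∀ p ∈ F, G.Adj p.1 p.2 := by
      intro p hp
      have := hwf₂ _ hp
      exact e.map_rel_iff.1 this
    set f : _ ⊕ (_ × _) → _ ⊕ (_ × _) :=
      Sum.elim (fun z => Sum.inl (e z)) (fun p => Sum.inr (e p.1, e p.2)) with hfdef
    have hfinj : Function.Injective f := by
      intro x y hxy
      match x, y with
      | Sum.inl a, Sum.inl b =>
        have : e a = e b := by simpa [hfdef] using hxy
        rw [e.injective this]
      | Sum.inl a, Sum.inr p => simp [hfdef] at hxy
      | Sum.inr p, Sum.inl a => simp [hfdef] at hxy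
      | Sum.inr p, Sum.inr q =>
        have h1 : (e p.1, e p.2) = (e q.1, e q.2) := by simpa [hfdef] using hxy
        have h2 : p.1 = q.1 := e.injective (congrArg Prod.fst h1)
        have h3 : p.2 = q.2 := e.injective (congrArg Prod.snd h1)
        rw [show p = q from Prod.ext h2 h3]
    have hfadj : ∀ a b, (AttachAll G F).Adj a b → (AttachAll H F₂).Adj (f a) (f b) := by
      have main : ∀ (p : _ × _) (z : _), p ∈ F → (z = p.1 ∨ z = p.2) →
          (AttachAll H F₂).Adj (f (Sum.inr p)) (f (Sum.inl z)) := by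
        intro p z hpF hz
        apply attach_adj_inr_inl.2
        refine ⟨hpF, ?_⟩
        rcases hz with rfl | rfl
        · exact Or.inl rfl
        · exact Or.inr rfl
      intro a b hab
      match a, b with
      | Sum.inl z, Sum.inl z' =>
        exact attach_adj_inl_inl.2 (e.map_rel_iff.2 (attach_adj_inl_inl.1 hab))
      | Sum.inr p, Sum.inl z =>
        have h := attach_adj_inr_inl.1 hab
        exact main p z h.1 h.2
      | Sum.inl z, Sum.inr p =>
        have h := attach_adj_inl_inr.1 hab
        exact (main p z h.1 h.2).symm
      | Sum.inr p, Sum.inr q => exact absurd hab attach_not_adj_inr_inr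
    have htreF : ¬ContainsTrefoil (AttachAll G F) :=
      fun hh => htre₂ (trefoil_mono f hfinj hfadj hh)
    obtain ⟨r, pa, d, hadj, hd, h3, hFT⟩ := ih F hwf htreF
    -- transport the tree along e
    refine ⟨e r, fun z => e (pa (e.symm z)), fun z => d (e.symm z), ?_, ?_, ?_, ?_⟩
    all_goals {
      have hinT : ∀ a b, inT r pa a b → inT (e r) (fun z => e (pa (e.symm z))) (e a) (e b) := by
        rintro a b (⟨h1, h2⟩ | ⟨h1, h2⟩)
        · exact Or.inl ⟨by simp [h1], fun hh => h2 (e.injective hh)⟩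
        · exact Or.inr ⟨by simp [h1], fun hh => h2 (e.injective hh)⟩
      have hinT' : ∀ a b, inT (e r) (fun z => e (pa (e.symm z))) a b →
          inT r pa (e.symm a) (e.symm b) := by
        rintro a b (⟨h1, h2⟩ | ⟨h1, h2⟩)
        · refine Or.inl ⟨?_, fun hh => h2 (by rw [← hh]; exact (e.apply_symm_apply _).symm)⟩
          have := congrArg e.symm h1
          simpa using this
        · refine Or.inr ⟨?_, fun hh => h2 (by rw [← hh]; exact (e.apply_symm_apply _).symm)⟩
          have := congrArg e.symm h1
          simpa using this
      first
      | { intro z hz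
          have hz' : e.symm z ≠ r := fun hh => hz (by rw [← e.apply_symm_apply z, hh])
          have := hadj _ hz'
          have h2 : H.Adj (e (pa (e.symm z))) (e (e.symm z)) := e.map_rel_iff.2 this
          rwa [e.apply_symm_apply] at h2 }
      | { intro z hz
          have hz' : e.symm z ≠ r := fun hh => hz (by rw [← e.apply_symm_apply z, hh])
          have := hd _ hz'
          simpa using this }
      | { intro x y hxy hnT
          have hxy' : G.Adj (e.symm x) (e.symm y) := e.symm.map_rel_iff.2 hxy
          have hnT' : ¬ inT r pa (e.symm x) (e.symm y) := fun hh => by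
            have := hinT _ _ hh
            rw [e.apply_symm_apply, e.apply_symm_apply] at this
            exact hnT this
          obtain ⟨s, hs1, hs2, hs3, hs4⟩ := h3 _ _ hxy' hnT'
          refine ⟨e s, ?_, ?_, ?_, ?_⟩
          · have h2 : H.Adj (e (e.symm x)) (e s) := e.map_rel_iff.2 hs1
            rwa [e.apply_symm_apply] at h2
          · have h2 : H.Adj (e (e.symm y)) (e s) := e.map_rel_iff.2 hs2
            rwa [e.apply_symm_apply] at h2
          · have h2 := hinT _ _ hs3
            rwa [e.apply_symm_apply] at h2
          · have h2 := hinT _ _ hs4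
            rwa [e.apply_symm_apply] at h2 }
      | { intro p hp
          have hpF : (e.symm p.1, e.symm p.2) ∈ F := by
            show (e (e.symm p.1), e (e.symm p.2)) ∈ F₂
            rw [e.apply_symm_apply, e.apply_symm_apply]
            exact hp
          have := hFT _ hpF
          have h2 := hinT _ _ this
          rwa [e.apply_symm_apply, e.apply_symm_apply] at h2 }
    }

theorem attach_empty_trefoil {V : Type} {G : SimpleGraph V} :
    ContainsTrefoil (AttachAll G (∅ : Set (V × V))) → ContainsTrefoil G := by
  rintro ⟨a, b, c, x, y, z, hinj, h1, h2, h3, h4, h5, h6, h7, h8, h9⟩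
  have extract : ∀ α β : V ⊕ (V × V), (AttachAll G (∅ : Set (V × V))).Adj α β →
      ∃ a' b', α = Sum.inl a' ∧ β = Sum.inl b' ∧ G.Adj a' b' := by
    intro α β hαβ
    match α, β with
    | Sum.inl a', Sum.inl b' => exact ⟨a', b', rfl, rfl, attach_adj_inl_inl.1 hαβ⟩
    | Sum.inr p, Sum.inl b' => exact absurd (attach_adj_inr_inl.1 hαβ).1 (Set.notMem_empty p)
    | Sum.inl a', Sum.inr p => exact absurd (attach_adj_inl_inr.1 hαβ).1 (Set.notMem_empty p)
    | Sum.inr p, Sum.inr q => exact absurd hαβ attach_not_adj_inr_inr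
  obtain ⟨a0, b0, rfl, rfl, hab⟩ := extract _ _ h1
  obtain ⟨b1, c0, hb1, rfl, -⟩ := extract _ _ h2
  obtain ⟨x0, a1, rfl, ha1, -⟩ := extract _ _ h4
  obtain ⟨y0, b2, rfl, hb2, -⟩ := extract _ _ h6
  obtain ⟨z0, c1, rfl, hc1, -⟩ := extract _ _ h8
  refine ⟨a0, b0, c0, x0, y0, z0, ?_, hab, attach_adj_inl_inl.1 h2, attach_adj_inl_inl.1 h3,
    attach_adj_inl_inl.1 h4, attach_adj_inl_inl.1 h5, attach_adj_inl_inl.1 h6,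
    attach_adj_inl_inl.1 h7, attach_adj_inl_inl.1 h8, attach_adj_inl_inl.1 h9⟩
  have hcomp : ![Sum.inl a0, Sum.inl b0, Sum.inl c0, Sum.inl x0, Sum.inl y0,
      (Sum.inl z0 : V ⊕ (V × V))] = Sum.inl ∘ ![a0, b0, c0, x0, y0, z0] := by
    funext i; fin_cases i <;> rfl
  rw [hcomp] at hinj
  exact Function.Injective.of_comp hinj

/-- The Bestvina–Brady group of a trefoil-free 2-tree is a RAAG. -/
theorem stmt_7 {V : Type} [Fintype V] (G : SimpleGraph V)
    (h2 : Is2Tree G) (htre : ¬ContainsTrefoil G) :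
    IsRAAG ↥(BBG G) := by
  have htre0 : ¬ContainsTrefoil (AttachAll G (∅ : Set (V × V))) :=
    fun h => htre (attach_empty_trefoil h)
  obtain ⟨r, pa, d, hadj, hd, h3, -⟩ :=
    partA h2 ∅ (fun p hp => absurd hp (Set.notMem_empty p)) htre0
  exact partB G r pa d hadj hd h3
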